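/- Let A and B be abelian groups. Define Ψ : C³(A,B) → C³(A,B) by Ψ(ω)(x₁,x₂,x₃) = Σ_{σ ∈ S₃} sgn(σ)·ω(x_{σ(1)}, x_{σ(2)}, x_{σ(3)}). Then: (i) Ψ is a group homomorphism; (ii) if ω ∈ Z³(A,B) is a 3-cocycle, then Ψ(ω) is ℤ-trilinear in each variable and alternating (it vanishes whenever two arguments are equal); (iii) Ψ(τ) = 0 for every 3-coboundary τ ∈ B³(A,B). Consequently Ψ induces a group homomorphism from H³(A,B) to the group of alternating trilinear maps A × A × A → B. -/
import Mathlib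


/-!
Statement 8: the total antisymmetrization map `Ψ` on 3-cochains is a group
homomorphism, sends 3-cocycles to alternating trilinear maps, kills
3-coboundaries, and hence induces a homomorphism on `H³(A,B)`.
-/

namespace Zesting

variable {A B : Type*} [CommGroup A] [AddCommGroup B]

/-- `Ψ(ω)(x₁,x₂,x₃) = Σ_{σ ∈ S₃} sgn(σ)·ω(x_{σ(1)}, x_{σ(2)}, x_{σ(3)})`. -/
def Psi (ω : A → A → A → B) : A → A → A → B := fun x₁ x₂ x₃ =>
  ∑ σ : Equiv.Perm (Fin 3),
    ((Equiv.Perm.sign σ : ℤˣ) : ℤ) •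
      ω (![x₁, x₂, x₃] (σ 0)) (![x₁, x₂, x₃] (σ 1)) (![x₁, x₂, x₃] (σ 2))

/-- `ω ∈ Z³(A,B)` (trivial action, inhomogeneous cochains). -/
def IsCocycle3 (ω : A → A → A → B) : Prop :=
  ∀ x y z w, ω y z w - ω (x * y) z w + ω x (y * z) w - ω x y (z * w) + ω x y z = 0

/-- `τ ∈ B³(A,B)` (trivial action, inhomogeneous cochains). -/
def IsCoboundary3 (τ : A → A → A → B) : Prop :=
  ∃ κ : A → A → B, ∀ x y z, τ x y z = κ y z - κ (x * y) z + κ x (y * z) - κ x y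

set_option linter.unusedSectionVars false

lemma psi_eq (ω : A → A → A → B) (x y z : A) :

    Psi ω x y z = ω x y z - ω y x z - ω x z y - ω z y x + ω y z x + ω z x y := by
  have huniv : (Finset.univ : Finset (Equiv.Perm (Fin 3))) =
      {Equiv.refl (Fin 3), Equiv.swap 0 1, Equiv.swap 1 2, Equiv.swap 0 2,
        Equiv.swap 0 1 * Equiv.swap 1 2, Equiv.swap 1 2 * Equiv.swap 0 1} := by decide
  rw [Psi, huniv]
  rw [Finset.sum_insert (by decide), Finset.sum_insert (by decide),
    Finset.sum_insert (by decide), Finset.sum_insert (by decide),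
    Finset.sum_insert (by decide), Finset.sum_singleton]
  simp only [Equiv.refl_apply,
    show (Equiv.swap (0:Fin 3) 1) 0 = 1 from by decide,
    show (Equiv.swap (0:Fin 3) 1) 1 = 0 from by decide,
    show (Equiv.swap (0:Fin 3) 1) 2 = 2 from by decide,
    show (Equiv.swap (1:Fin 3) 2) 0 = 0 from by decide,
    show (Equiv.swap (1:Fin 3) 2) 1 = 2 from by decide,
    show (Equiv.swap (1:Fin 3) 2) 2 = 1 from by decide,
    show (Equiv.swap (0:Fin 3) 2) 0 = 2 from by decide,
    show (Equiv.swap (0:Fin 3) 2) 1 = 1 from by decide,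
    show (Equiv.swap (0:Fin 3) 2) 2 = 0 from by decide,
    show ((Equiv.swap 0 1 * Equiv.swap 1 2 : Equiv.Perm (Fin 3))) 0 = 1 from by decide,
    show ((Equiv.swap 0 1 * Equiv.swap 1 2 : Equiv.Perm (Fin 3))) 1 = 2 from by decide,
    show ((Equiv.swap 0 1 * Equiv.swap 1 2 : Equiv.Perm (Fin 3))) 2 = 0 from by decide,
    show ((Equiv.swap 1 2 * Equiv.swap 0 1 : Equiv.Perm (Fin 3))) 0 = 2 from by decide,
    show ((Equiv.swap 1 2 * Equiv.swap 0 1 : Equiv.Perm (Fin 3))) 1 = 0 from by decide,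
    show ((Equiv.swap 1 2 * Equiv.swap 0 1 : Equiv.Perm (Fin 3))) 2 = 1 from by decide,
    show ((Equiv.Perm.sign (Equiv.refl (Fin 3)) : ℤˣ) : ℤ) = 1 from by decide,
    show ((Equiv.Perm.sign (Equiv.swap (0:Fin 3) 1) : ℤˣ) : ℤ) = -1 from by decide,
    show ((Equiv.Perm.sign (Equiv.swap (1:Fin 3) 2) : ℤˣ) : ℤ) = -1 from by decide,
    show ((Equiv.Perm.sign (Equiv.swap (0:Fin 3) 2) : ℤˣ) : ℤ) = -1 from by decide,
    show ((Equiv.Perm.sign (Equiv.swap (0:Fin 3) 1 * Equiv.swap 1 2) : ℤˣ) : ℤ) = 1 from by decide,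
    show ((Equiv.Perm.sign (Equiv.swap (1:Fin 3) 2 * Equiv.swap (0:Fin 3) 1) : ℤˣ) : ℤ) = 1 from by decide,
    Matrix.cons_val_zero, Matrix.cons_val_one, Matrix.head_cons, Matrix.cons_val_two, Matrix.tail_cons,
    one_smul, neg_smul]
  abel

lemma psi_mul_left (ω : A → A → A → B) (hω : IsCocycle3 ω) (x x' y z : A) :
    Psi ω (x * x') y z = Psi ω x y z + Psi ω x' y z := by
  have e1 : ω x' y z - ω (x * x') y z + ω x (x' * y) z - ω x x' (y * z) + ω x x' y = 0 := hω x x' y z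
  have e2 : ω x' z y - ω (x * x') z y + ω x (x' * z) y - ω x x' (y * z) + ω x x' z = 0 := by have h := hω x x' z y; rwa [mul_comm z y] at h
  have e3 : ω y x' z - ω (x * y) x' z + ω x (x' * y) z - ω x y (x' * z) + ω x y x' = 0 := by have h := hω x y x' z; rwa [mul_comm y x'] at h
  have e4 : ω y z x' - ω (x * y) z x' + ω x (y * z) x' - ω x y (x' * z) + ω x y z = 0 := by have h := hω x y z x'; rwa [mul_comm z x'] at h
  have e5 : ω z x' y - ω (x * z) x' y + ω x (x' * z) y - ω x z (x' * y) + ω x z x' = 0 := by have h := hω x z x' y; rwa [mul_comm z x'] at h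
  have e6 : ω z y x' - ω (x * z) y x' + ω x (y * z) x' - ω x z (x' * y) + ω x z y = 0 := by have h := hω x z y x'; rwa [mul_comm z y, mul_comm y x'] at h
  have e7 : ω x x' z - ω (x * y) x' z + ω y (x * x') z - ω y x (x' * z) + ω y x x' = 0 := by have h := hω y x x' z; rwa [mul_comm y x] at h
  have e8 : ω x z x' - ω (x * y) z x' + ω y (x * z) x' - ω y x (x' * z) + ω y x z = 0 := by have h := hω y x z x'; rwa [mul_comm y x, mul_comm z x'] at h
  have e9 : ω z x x' - ω (y * z) x x' + ω y (x * z) x' - ω y z (x * x') + ω y z x = 0 := by have h := hω y z x x'; rwa [mul_comm z x] at h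
  have e10 : ω x x' y - ω (x * z) x' y + ω z (x * x') y - ω z x (x' * y) + ω z x x' = 0 := by have h := hω z x x' y; rwa [mul_comm z x] at h
  have e11 : ω x y x' - ω (x * z) y x' + ω z (x * y) x' - ω z x (x' * y) + ω z x y = 0 := by have h := hω z x y x'; rwa [mul_comm z x, mul_comm y x'] at h
  have e12 : ω y x x' - ω (y * z) x x' + ω z (x * y) x' - ω z y (x * x') + ω z y x = 0 := by have h := hω z y x x'; rwa [mul_comm z y, mul_comm y x] at h
  have key : (ω (x * x') y z - ω y (x * x') z - ω (x * x') z y - ω z y (x * x') + ω y z (x * x') + ω z (x * x') y)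
      - ((ω x y z - ω y x z - ω x z y - ω z y x + ω y z x + ω z x y) + (ω x' y z - ω y x' z - ω x' z y - ω z y x' + ω y z x' + ω z x' y))
      = -(ω x' y z - ω (x * x') y z + ω x (x' * y) z - ω x x' (y * z) + ω x x' y) + (ω x' z y - ω (x * x') z y + ω x (x' * z) y - ω x x' (y * z) + ω x x' z) + (ω y x' z - ω (x * y) x' z + ω x (x' * y) z - ω x y (x' * z) + ω x y x') - (ω y z x' - ω (x * y) z x' + ω x (y * z) x' - ω x y (x' * z) + ω x y z) - (ω z x' y - ω (x * z) x' y + ω x (x' * z) y - ω x z (x' * y) + ω x z x') + (ω z y x' - ω (x * z) y x' + ω x (y * z) x' - ω x z (x' * y) + ω x z y) - (ω x x' z - ω (x * y) x' z + ω y (x * x') z - ω y x (x' * z) + ω y x x') + (ω x z x' - ω (x * y) z x' + ω y (x * z) x' - ω y x (x' * z) + ω y x z) - (ω z x x' - ω (y * z) x x' + ω y (x * z) x' - ω y z (x * x') + ω y z x) + (ω x x' y - ω (x * z) x' y + ω z (x * x') y - ω z x (x' * y) + ω z x x') - (ω x y x' - ω (x * z) y x' + ω z (x * y) x' - ω z x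 (x' * y) + ω z x y) + (ω y x x' - ω (y * z) x x' + ω z (x * y) x' - ω z y (x * x') + ω z y x) := by abel
  rw [e1, e2, e3, e4, e5, e6, e7, e8, e9, e10, e11, e12] at key
  rw [psi_eq, psi_eq, psi_eq, ← sub_eq_zero]
  simpa using key



lemma psi_add (ω ω' : A → A → A → B) : Psi (ω + ω') = Psi ω + Psi ω' := by
  funext x y z
  show Psi (ω + ω') x y z = Psi ω x y z + Psi ω' x y z
  rw [psi_eq, psi_eq, psi_eq]
  simp only [Pi.add_apply]
  abel

lemma psi_swap12 (ω : A → A → A → B) (x y z : A) : Psi ω y x z = -Psi ω x y z := by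
  rw [psi_eq, psi_eq]; abel

lemma psi_swap13 (ω : A → A → A → B) (x y z : A) : Psi ω z y x = -Psi ω x y z := by
  rw [psi_eq, psi_eq]; abel

lemma psi_alt12 (ω : A → A → A → B) (x y : A) : Psi ω x x y = 0 := by
  rw [psi_eq]; abel

lemma psi_mul_mid (ω : A → A → A → B) (hω : IsCocycle3 ω) (x y y' z : A) :
    Psi ω x (y * y') z = Psi ω x y z + Psi ω x y' z := by
  have h := psi_mul_left ω hω y y' x z
  rw [psi_swap12 ω x (y * y') z, psi_swap12 ω x y z, psi_swap12 ω x y' z] at h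
  apply neg_injective; rw [h]; abel

lemma psi_mul_right (ω : A → A → A → B) (hω : IsCocycle3 ω) (x y z z' : A) :
    Psi ω x y (z * z') = Psi ω x y z + Psi ω x y z' := by
  have h := psi_mul_left ω hω z z' y x
  rw [psi_swap13 ω x y (z * z'), psi_swap13 ω x y z, psi_swap13 ω x y z'] at h
  apply neg_injective; rw [h]; abel

lemma psi_coboundary (τ : A → A → A → B) (hτ : IsCoboundary3 τ) : Psi τ = 0 := by
  obtain ⟨κ, hk⟩ := hτ
  funext x y z
  show Psi τ x y z = 0
  rw [psi_eq]
  simp only [hk]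
  rw [mul_comm y x, mul_comm z x, mul_comm z y]
  abel

/-- (i) `Ψ` is a group homomorphism; (ii) on 3-cocycles `Ψ(ω)`
is trilinear and alternating; (iii) `Ψ` vanishes on 3-coboundaries.
Consequently `Ψ` descends to cohomology. -/
theorem statement8 :
    (∀ ω ω' : A → A → A → B, Psi (ω + ω') = Psi ω + Psi ω') ∧
    (∀ ω : A → A → A → B, IsCocycle3 ω →
      ((∀ x x' y z, Psi ω (x * x') y z = Psi ω x y z + Psi ω x' y z) ∧
       (∀ x y y' z, Psi ω x (y * y') z = Psi ω x y z + Psi ω x y' z) ∧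
       (∀ x y z z', Psi ω x y (z * z') = Psi ω x y z + Psi ω x y z') ∧
       (∀ x y, Psi ω x x y = 0) ∧
       (∀ x y, Psi ω x y y = 0) ∧
       (∀ x y, Psi ω x y x = 0))) ∧
    (∀ τ : A → A → A → B, IsCoboundary3 τ → Psi τ = 0) ∧
    (∀ ω ω' : A → A → A → B, IsCocycle3 ω → IsCocycle3 ω' →
      IsCoboundary3 (ω - ω') → Psi ω = Psi ω') := by
  refine ⟨psi_add, ?_, psi_coboundary, ?_⟩
  · intro ω hω
    refine ⟨fun x x' y z => psi_mul_left ω hω x x' y z,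
      fun x y y' z => psi_mul_mid ω hω x y y' z,
      fun x y z z' => psi_mul_right ω hω x y z z',
      fun x y => psi_alt12 ω x y, ?_, ?_⟩
    · intro x y
      have h := psi_swap13 ω y y x
      rw [psi_alt12 ω y x] at h
      simpa using h
    · intro x y
      have h23 : Psi ω x y x = -Psi ω x x y := by rw [psi_eq, psi_eq]; abel
      rw [psi_alt12 ω x y] at h23; simpa using h23
  · intro ω ω' hω hω' hcb
    have h0 := psi_coboundary (ω - ω') hcb
    have : ω = ω' + (ω - ω') := by abel
    rw [this, psi_add, h0, add_zero]

end Zesting
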